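/- For every moment sequence s ∈ S_A one has the dimension formula D_s = m − γ_s, where D_s = dim F_s is the dimension of the face of s and γ_s = dim{f ∈ lin A : f vanishes on W(s)}. -/

import Mathlib

open MeasureTheory Set

set_option linter.unusedSectionVars false
namespace FaceDim

variable {X : Type*} [MeasurableSpace X] {m : ℕ}

/-- The set of conic combinations of points `A x`, `x ∈ T`. -/
def cone (A : X → Fin m → ℝ) (T : Set X) : Set (Fin m → ℝ) :=
  {v | ∃ (n : ℕ) (c : Fin n → ℝ) (p : Fin n → X),
    (∀ j, 0 ≤ c j) ∧ (∀ j, p j ∈ T) ∧ v = ∑ j, c j • A (p j)}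

theorem zero_mem_cone (A : X → Fin m → ℝ) (T : Set X) : 0 ∈ cone A T :=
  ⟨0, Fin.elim0, Fin.elim0, fun j => j.elim0, fun j => j.elim0, by simp⟩

theorem mem_cone_of_mem (A : X → Fin m → ℝ) {T : Set X} {x : X} (hx : x ∈ T) :
    A x ∈ cone A T :=
  ⟨1, fun _ => 1, fun _ => x, fun _ => zero_le_one, fun _ => hx, by simp⟩

theorem cone_smul_mem (A : X → Fin m → ℝ) {T : Set X} {v : Fin m → ℝ} {t : ℝ}
    (ht : 0 ≤ t) (hv : v ∈ cone A T) : t • v ∈ cone A T := by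
  obtain ⟨n, c, p, hc, hp, rfl⟩ := hv
  exact ⟨n, fun j => t * c j, p, fun j => mul_nonneg ht (hc j), hp, by
    rw [Finset.smul_sum]; simp [smul_smul]⟩

theorem cone_convex (A : X → Fin m → ℝ) (T : Set X) : Convex ℝ (cone A T) := by
  intro v hv w hw θ1 θ2 h1 h2 hsum
  obtain ⟨n1, c1, p1, hc1, hp1, rfl⟩ := hv
  obtain ⟨n2, c2, p2, hc2, hp2, rfl⟩ := hw
  refine ⟨n1 + n2, Fin.append (fun j => θ1 * c1 j) (fun j => θ2 * c2 j),
    Fin.append p1 p2, ?_, ?_, ?_⟩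
  · intro j
    refine Fin.addCases (fun i => ?_) (fun i => ?_) j
    · simpa [Fin.append_left] using mul_nonneg h1 (hc1 i)
    · simpa [Fin.append_right] using mul_nonneg h2 (hc2 i)
  · intro j
    refine Fin.addCases (fun i => ?_) (fun i => ?_) j
    · simpa [Fin.append_left] using hp1 i
    · simpa [Fin.append_right] using hp2 i
  · rw [Fin.sum_univ_add]
    simp only [Fin.append_left, Fin.append_right]
    rw [Finset.smul_sum, Finset.smul_sum]
    simp [smul_smul]

theorem cone_mono (A : X → Fin m → ℝ) {T T' : Set X} (h : T' ⊆ T) :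
    cone A T' ⊆ cone A T := by
  rintro v ⟨n, c, p, hc, hp, rfl⟩
  exact ⟨n, c, p, hc, fun j => h (hp j), rfl⟩

theorem cone_subset_span (A : X → Fin m → ℝ) (T : Set X) :
    cone A T ⊆ (Submodule.span ℝ (A '' T) : Set (Fin m → ℝ)) := by
  rintro v ⟨n, c, p, hc, hp, rfl⟩
  exact Submodule.sum_mem _ fun j _ => Submodule.smul_mem _ _
    (Submodule.subset_span ⟨p j, hp j, rfl⟩)

theorem linearMap_apply_eq_sum (gl : (Fin m → ℝ) →ₗ[ℝ] ℝ) (v : Fin m → ℝ) :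
    gl v = ∑ i, v i * gl (Pi.single i 1) := by
  have hv : v = ∑ i, v i • (Pi.single i 1 : Fin m → ℝ) := by
    ext j
    simp [Pi.single_apply, Finset.sum_ite_eq]
  calc gl v = gl (∑ i, v i • (Pi.single i 1 : Fin m → ℝ)) := by rw [← hv]
  _ = ∑ i, v i * gl (Pi.single i 1) := by rw [map_sum]; simp [smul_eq_mul]

theorem moment_mem_span (a : Fin m → X → ℝ) (μ : Measure X)
    (hint : ∀ i, Integrable (a i) μ) (T : Set X) (hTc : μ Tᶜ = 0) :
    (fun i => ∫ x, a i x ∂μ) ∈ Submodule.span ℝ ((fun x i => a i x) '' T) := by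
  set A : X → Fin m → ℝ := fun x i => a i x with hA
  by_contra hs
  obtain ⟨φ, hφ0, hφmap⟩ :=
    (Submodule.span ℝ (A '' T)).exists_dual_map_eq_bot_of_notMem hs inferInstance
  have hvan : ∀ v ∈ Submodule.span ℝ (A '' T), φ v = 0 := by
    intro v hv
    have : φ v ∈ Submodule.map φ (Submodule.span ℝ (A '' T)) :=
      Submodule.mem_map_of_mem hv
    rwa [hφmap, Submodule.mem_bot] at this
  have hAx : ∀ x ∈ T, φ (A x) = 0 := fun x hx =>
    hvan _ (Submodule.subset_span ⟨x, hx, rfl⟩)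
  set g : X → ℝ := fun x => ∑ i, a i x * φ (Pi.single i 1) with hg
  have hgA : ∀ x, g x = φ (A x) := fun x => (linearMap_apply_eq_sum φ (A x)).symm
  have hgint : ∀ i, Integrable (fun x => a i x * φ (Pi.single i 1)) μ :=
    fun i => (hint i).mul_const _
  have hval : ∫ x, g x ∂μ = φ (fun i => ∫ x, a i x ∂μ) := by
    rw [hg, integral_finset_sum _ fun i _ => hgint i,
      linearMap_apply_eq_sum φ (fun i => ∫ x, a i x ∂μ)]
    congr 1
    ext i
    rw [integral_mul_const]
  have hzero : ∫ x, g x ∂μ = 0 := by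
    apply integral_eq_zero_of_ae
    rw [Filter.EventuallyEq, ae_iff]
    apply measure_mono_null _ hTc
    intro x hx
    simp only [Set.mem_setOf_eq] at hx
    intro hxT
    exact hx (by rw [hgA x]; exact hAx x hxT)
  exact hφ0 (by rw [← hval, hzero])

theorem affineSpan_eq_top_of_span {E : Type*} [AddCommGroup E] [Module ℝ E]
    {sSet : Set E} (h0 : (0 : E) ∈ sSet) (hsp : Submodule.span ℝ sSet = ⊤) :
    affineSpan ℝ sSet = ⊤ := by
  refine eq_top_iff.mpr fun v _ => ?_
  have hv : v ∈ Submodule.span ℝ sSet := hsp ▸ Submodule.mem_top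
  have h0' : (0 : E) ∈ affineSpan ℝ sSet := subset_affineSpan ℝ sSet h0
  refine Submodule.span_induction (fun x hx => subset_affineSpan ℝ sSet hx) h0'
    (fun x y _ _ hx hy => ?_) (fun c x _ hx => ?_) hv
  · have := AffineSubspace.smul_vsub_vadd_mem (affineSpan ℝ sSet) 1 hx h0' hy
    simpa using this
  · have := AffineSubspace.smul_vsub_vadd_mem (affineSpan ℝ sSet) c hx h0' h0'
    simpa using this

set_option maxHeartbeats 2000000 in
theorem richter_aux (a : Fin m → X → ℝ) (ha : ∀ i, Measurable (a i)) (μ : Measure X)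
    (hint : ∀ i, Integrable (a i) μ) :
    ∀ (d : ℕ) (T : Set X), MeasurableSet T → μ Tᶜ = 0 →
      Module.finrank ℝ (Submodule.span ℝ ((fun x i => a i x) '' T)) ≤ d →
      (fun i => ∫ x, a i x ∂μ) ∈ cone (fun x i => a i x) T := by
  set A : X → Fin m → ℝ := fun x i => a i x with hA
  intro d
  induction d with
  | zero =>
    intro T hT hTc hrank
    have hsp : Submodule.span ℝ (A '' T) = ⊥ :=
      Submodule.finrank_eq_zero.mp (Nat.le_zero.mp hrank)
    have := moment_mem_span a μ hint T hTc
    rw [hsp, Submodule.mem_bot] at this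
    rw [this]
    exact zero_mem_cone A T
  | succ d ih =>
    intro T hT hTc hrank
    set s : Fin m → ℝ := fun i => ∫ x, a i x ∂μ with hs
    by_cases hsC : s ∈ cone A T
    · exact hsC
    set V : Submodule ℝ (Fin m → ℝ) := Submodule.span ℝ (A '' T) with hV
    have hsV : s ∈ V := moment_mem_span a μ hint T hTc
    have hCV : cone A T ⊆ (V : Set (Fin m → ℝ)) := cone_subset_span A T
    set CV : Set V := V.subtype ⁻¹' (cone A T) with hCVdef
    have hconv : Convex ℝ CV := (cone_convex A T).linear_preimage V.subtype
    have h0CV : (0 : V) ∈ CV := by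
      show V.subtype 0 ∈ cone A T
      rw [map_zero]; exact zero_mem_cone A T
    have hspanCV : Submodule.span ℝ CV = ⊤ := by
      apply Submodule.map_injective_of_injective V.injective_subtype
      rw [Submodule.map_span, Submodule.map_top, Submodule.range_subtype]
      have himg : V.subtype '' CV = cone A T := by
        apply Set.Subset.antisymm
        · rintro _ ⟨w, hw, rfl⟩; exact hw
        · intro v hv; exact ⟨⟨v, hCV hv⟩, hv, rfl⟩
      rw [himg]
      refine le_antisymm (Submodule.span_le.mpr hCV) ?_
      rw [hV]
      exact Submodule.span_mono fun v ⟨x, hx, hxv⟩ => hxv ▸ mem_cone_of_mem A hx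
    have haff : affineSpan ℝ CV = ⊤ := affineSpan_eq_top_of_span h0CV hspanCV
    have hne : (interior CV).Nonempty :=
      hconv.interior_nonempty_iff_affineSpan_eq_top.mpr haff
    set s' : V := ⟨s, hsV⟩ with hs'
    have hs'CV : s' ∉ CV := hsC
    obtain ⟨f, hf⟩ := geometric_hahn_banach_open_point hconv.interior isOpen_interior
      (fun h => hs'CV (interior_subset h))
    obtain ⟨b0, hb0⟩ := hne
    have hfle : ∀ v ∈ CV, f v ≤ f s' := by
      intro v hv
      have key : ∀ t : ℝ, t ∈ Set.Ioc (0:ℝ) 1 → f ((1 - t) • v + t • b0) < f s' :=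
        fun t ht => hf _ (hconv.combo_closure_interior_mem_interior
          (subset_closure hv) hb0 (by linarith [ht.2]) ht.1 (by ring))
      have hcont : Filter.Tendsto (fun t : ℝ => f ((1 - t) • v + t • b0))
          (nhds 0) (nhds (f v)) := by
        have hc : Continuous fun t : ℝ => f ((1 - t) • v + t • b0) := by fun_prop
        have := hc.tendsto 0
        simpa using this
      refine le_of_tendsto (hcont.mono_left nhdsWithin_le_nhds :
        Filter.Tendsto _ (nhdsWithin 0 (Set.Ioi (0:ℝ))) _) ?_
      have h1 : ∀ᶠ t in nhdsWithin (0:ℝ) (Set.Ioi 0), t ∈ Set.Ioi (0:ℝ) :=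
        eventually_mem_nhdsWithin
      have h2 : ∀ᶠ t in nhdsWithin (0:ℝ) (Set.Ioi 0), t < 1 :=
        Filter.Eventually.filter_mono nhdsWithin_le_nhds
          (Filter.Tendsto.eventually_lt_const (by norm_num) Filter.tendsto_id)
      filter_upwards [h1, h2] with t ht1 ht2
      exact (key t ⟨ht1, ht2.le⟩).le
    have hf0 : 0 ≤ f s' := by
      have := hfle 0 h0CV
      simpa using this
    have hfnonpos : ∀ v ∈ CV, f v ≤ 0 := by
      intro v hv
      by_contra hpos
      push_neg at hpos
      have hsc : ((f s' + 1) / f v) • v ∈ CV := by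
        show V.subtype _ ∈ cone A T
        rw [_root_.map_smul]
        exact cone_smul_mem A (by positivity) hv
      have h2 := hfle _ hsc
      rw [_root_.map_smul, smul_eq_mul, div_mul_cancel₀ _ (ne_of_gt hpos)] at h2
      linarith
    obtain ⟨q, hq⟩ := Submodule.exists_isCompl V
    set gl : (Fin m → ℝ) →ₗ[ℝ] ℝ :=
      -((f.toLinearMap).comp (V.projectionOnto q hq)) with hgl
    have hglV : ∀ w : V, gl w = -(f w) := fun w => by
      simp [hgl, Submodule.projectionOnto_apply_left]
    have hglT : ∀ x ∈ T, 0 ≤ gl (A x) := by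
      intro x hx
      have hmem : (⟨A x, Submodule.subset_span ⟨x, hx, rfl⟩⟩ : V) ∈ CV :=
        mem_cone_of_mem A hx
      have := hfnonpos _ hmem
      rw [show A x = ((⟨A x, Submodule.subset_span ⟨x, hx, rfl⟩⟩ : V) :
        Fin m → ℝ) from rfl, hglV]
      linarith
    have hgls : gl s ≤ 0 := by
      rw [show s = (s' : Fin m → ℝ) from rfl, hglV]
      linarith
    have hglne : ∃ w, w ∈ V ∧ gl w ≠ 0 := by
      refine ⟨((b0 - s' : V) : Fin m → ℝ), (b0 - s').2, ?_⟩
      rw [hglV, map_sub]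
      intro hcon
      linarith [hf b0 hb0, neg_eq_zero.mp hcon]
    set g : X → ℝ := fun x => ∑ i, a i x * gl (Pi.single i 1) with hg
    have hgA : ∀ x, g x = gl (A x) := fun x => (linearMap_apply_eq_sum gl (A x)).symm
    have hgm : Measurable g :=
      Finset.measurable_sum _ fun i _ => (ha i).mul_const _
    have hgint : Integrable g μ :=
      integrable_finset_sum _ fun i _ => (hint i).mul_const _
    have hgval : ∫ x, g x ∂μ = gl s := by
      rw [hg, integral_finset_sum _ fun i _ => (hint i).mul_const _,
        linearMap_apply_eq_sum gl s]
      congr 1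
      ext i
      rw [integral_mul_const]
    have hae0 : 0 ≤ᵐ[μ] g := by
      rw [Filter.EventuallyLE, ae_iff]
      apply measure_mono_null _ hTc
      intro x hx
      simp only [Set.mem_setOf_eq, Pi.zero_apply, not_le] at hx
      intro hxT
      exact absurd (by rw [hgA x]; exact hglT x hxT) (not_le.mpr hx)
    have hint0 : ∫ x, g x ∂μ = 0 :=
      le_antisymm (hgval ▸ hgls) (integral_nonneg_of_ae hae0)
    have hg0 : g =ᵐ[μ] 0 := (integral_eq_zero_iff_of_nonneg_ae hae0 hgint).mp hint0
    set T' : Set X := T ∩ {x | g x = 0} with hT'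
    have hT'm : MeasurableSet T' := hT.inter (hgm (measurableSet_singleton 0))
    have hT'c : μ T'ᶜ = 0 := by
      rw [hT', Set.compl_inter]
      refine measure_union_null hTc ?_
      have := ae_iff.mp hg0
      simpa [Set.compl_setOf] using this
    have hrank' : Module.finrank ℝ (Submodule.span ℝ (A '' T')) ≤ d := by
      have hle : Submodule.span ℝ (A '' T') ≤ V ⊓ LinearMap.ker gl := by
        rw [Submodule.span_le]
        rintro _ ⟨x, ⟨hxT, hx0⟩, rfl⟩
        refine ⟨Submodule.subset_span ⟨x, hxT, rfl⟩, ?_⟩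
        rw [SetLike.mem_coe, LinearMap.mem_ker, ← hgA x]
        exact hx0
      have hnle : ¬ V ≤ LinearMap.ker gl := by
        obtain ⟨w, hwV, hwne⟩ := hglne
        exact fun hle' => hwne (hle' hwV)
      have hlt : V ⊓ LinearMap.ker gl < V :=
        lt_of_le_of_ne inf_le_left fun h => hnle (h ▸ inf_le_right)
      have hcalc : Module.finrank ℝ (Submodule.span ℝ (A '' T')) < d + 1 :=
        calc Module.finrank ℝ (Submodule.span ℝ (A '' T'))
            ≤ Module.finrank ℝ (V ⊓ LinearMap.ker gl : Submodule ℝ (Fin m → ℝ)) :=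
              Submodule.finrank_mono hle
          _ < Module.finrank ℝ V := Submodule.finrank_lt_finrank_of_lt hlt
          _ ≤ d + 1 := hrank
      exact Nat.lt_succ_iff.mp hcalc
    exact cone_mono A Set.inter_subset_left (ih T' hT'm hT'c hrank')

theorem exists_eps_mem {E : Type*} [NormedAddCommGroup E] [NormedSpace ℝ E]
    {F : Set E} {s t : E} (hs : s ∈ intrinsicInterior ℝ F) (ht : t ∈ F) :
    ∃ ε : ℝ, 0 < ε ∧ s + ε • (s - t) ∈ F := by
  obtain ⟨p, hp, hps⟩ := hs
  have hsF : s ∈ F := by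
    have hpF : p ∈ ((↑) ⁻¹' F : Set (affineSpan ℝ F)) := interior_subset hp
    rw [← hps]; exact hpF
  have hsA : s ∈ affineSpan ℝ F := subset_affineSpan ℝ F hsF
  have htA : t ∈ affineSpan ℝ F := subset_affineSpan ℝ F ht
  have hmem : ∀ ε : ℝ, s + ε • (s - t) ∈ affineSpan ℝ F := fun ε => by
    have := AffineSubspace.smul_vsub_vadd_mem (affineSpan ℝ F) ε hsA htA hsA
    simpa [vsub_eq_sub, vadd_eq_add, add_comm] using this
  set c : ℝ → affineSpan ℝ F := fun ε => ⟨s + ε • (s - t), hmem ε⟩ with hc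
  have hcont : Continuous c := by
    apply Continuous.subtype_mk
    fun_prop
  have hc0 : c 0 = p := by
    apply Subtype.ext
    simp [hc, ← hps]
  have htd := hcont.tendsto 0
  rw [hc0] at htd
  have hev : ∀ᶠ ε in nhds (0:ℝ), c ε ∈ interior ((↑) ⁻¹' F : Set (affineSpan ℝ F)) :=
    htd (isOpen_interior.mem_nhds hp)
  have hev' : ∀ᶠ ε in nhdsWithin (0:ℝ) (Set.Ioi 0),
      c ε ∈ interior ((↑) ⁻¹' F : Set (affineSpan ℝ F)) :=
    hev.filter_mono nhdsWithin_le_nhds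
  obtain ⟨ε, hmem', hε⟩ := (hev'.and eventually_mem_nhdsWithin).exists
  have hcF : c ε ∈ ((↑) ⁻¹' F : Set (affineSpan ℝ F)) := interior_subset hmem'
  exact ⟨ε, hε, hcF⟩

/-- The dimension of the "dot-product annihilator" of a set. -/
theorem finrank_dot_ann (W' : Set (Fin m → ℝ)) :
    Module.finrank ℝ (Submodule.span ℝ {pc : Fin m → ℝ | ∀ v ∈ W', ∑ i, pc i * v i = 0})
      = m - Module.finrank ℝ (Submodule.span ℝ W') := by
  set dotD : (Fin m → ℝ) →ₗ[ℝ] Module.Dual ℝ (Fin m → ℝ) :=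
    LinearMap.mk₂ ℝ (fun u v => ∑ i, u i * v i)
      (fun m₁ m₂ n => by simp [add_mul, Finset.sum_add_distrib])
      (fun c mm n => by simp [Finset.mul_sum, smul_eq_mul, mul_assoc])
      (fun mm n₁ n₂ => by simp [mul_add, Finset.sum_add_distrib])
      (fun c mm n => by simp [Finset.mul_sum, smul_eq_mul, mul_left_comm]) with hdotD
  have hdot_apply : ∀ u v : Fin m → ℝ, dotD u v = ∑ i, u i * v i := fun u v => rfl
  have hinj : Function.Injective dotD := by
    rw [← LinearMap.ker_eq_bot, eq_bot_iff]
    intro u hu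
    rw [LinearMap.mem_ker] at hu
    have : ∀ j, u j = 0 := by
      intro j
      have h1 : dotD u (Pi.single j 1) = 0 := by rw [hu]; rfl
      rw [hdot_apply] at h1
      simpa [Pi.single_apply, Finset.sum_ite_eq, mul_ite] using h1
    exact Submodule.mem_bot ℝ |>.mpr (funext this)
  set Φ : Submodule ℝ (Module.Dual ℝ (Fin m → ℝ)) :=
    Submodule.map dotD (Submodule.span ℝ W') with hΦ
  have hset : {pc : Fin m → ℝ | ∀ v ∈ W', ∑ i, pc i * v i = 0}
      = ↑(Φ.dualCoannihilator) := by
    ext pc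
    rw [SetLike.mem_coe, Submodule.mem_dualCoannihilator]
    constructor
    · intro h φ hφ
      obtain ⟨u, hu, rfl⟩ := hφ
      have hker : Submodule.span ℝ W' ≤ LinearMap.ker (dotD.flip pc) := by
        rw [Submodule.span_le]
        intro v hv
        rw [SetLike.mem_coe, LinearMap.mem_ker, LinearMap.flip_apply, hdot_apply]
        have := h v hv
        rw [Finset.sum_congr rfl fun i _ => mul_comm (v i) (pc i)]
        exact this
      have := hker hu
      rwa [LinearMap.mem_ker, LinearMap.flip_apply] at this
    · intro h v hv
      have := h (dotD v) (Submodule.mem_map_of_mem (Submodule.subset_span hv))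
      rw [hdot_apply] at this
      rw [Finset.sum_congr rfl fun i _ => mul_comm (pc i) (v i)]
      exact this
  have hspan : Submodule.span ℝ {pc : Fin m → ℝ | ∀ v ∈ W', ∑ i, pc i * v i = 0}
      = Φ.dualCoannihilator := by rw [hset, Submodule.span_eq]
  have hrkΦ : Module.finrank ℝ Φ = Module.finrank ℝ (Submodule.span ℝ W') :=
    (Submodule.equivMapOfInjective dotD hinj (Submodule.span ℝ W')).finrank_eq.symm
  have hmain := Subspace.finrank_add_finrank_dualCoannihilator_eq Φ
  rw [hrkΦ] at hmain
  have hdim : Module.finrank ℝ (Fin m → ℝ) = m := by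
    simp [Module.finrank_pi]
  rw [hdim] at hmain
  rw [hspan]
  omega

theorem integrable_dirac_of_meas {f : X → ℝ} (hf : Measurable f) (x : X) :
    Integrable f (Measure.dirac x) := by
  constructor
  · exact hf.aestronglyMeasurable
  · show (∫⁻ y, (‖f y‖₊ : ENNReal) ∂Measure.dirac x) < ⊤
    rw [lintegral_dirac' x hf.nnnorm.coe_nnreal_ennreal]
    exact ENNReal.coe_lt_top

end FaceDim

open FaceDim

set_option maxHeartbeats 2000000 in
/-- Dimension formula: for every moment sequence `s ∈ S_A` one has
`D_s = m - γ_s`, where `D_s = dim F_s` is the dimension of the face of `s` and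
`γ_s` is the dimension of the space of functions in `lin A` vanishing on the
set of atoms `W(s)`. -/
theorem face_dimension_formula {X : Type*} [MeasurableSpace X] {m : ℕ}
    (a : Fin m → X → ℝ) (ha : ∀ i, Measurable (a i))
    (hindep : LinearIndependent ℝ a) :
    let S : Set (Fin m → ℝ) := {s | ∃ μ : Measure X,
      (∀ i, Integrable (a i) μ) ∧ ∀ i, s i = ∫ x, a i x ∂μ}
    ∀ (s : Fin m → ℝ), s ∈ S →
    ∀ (F : Set (Fin m → ℝ)), IsExtreme ℝ S F → s ∈ intrinsicInterior ℝ F →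
    let W : Set X := {x | ∃ μ : Measure X, (∀ i, Integrable (a i) μ) ∧
      (∀ i, s i = ∫ y, a i y ∂μ) ∧ 0 < μ {y | ∀ i, a i y = a i x}}
    Module.finrank ℝ (Submodule.span ℝ F) =
      m - Module.finrank ℝ (Submodule.span ℝ
        {pc : Fin m → ℝ | ∀ x ∈ W, ∑ i, pc i * a i x = 0}) := by
  intro S s hsS F hF hsi W
  classical
  set A : X → Fin m → ℝ := fun x i => a i x with hA
  set U : Submodule ℝ (Fin m → ℝ) := Submodule.span ℝ (A '' W) with hU
  have hsF : s ∈ F := intrinsicInterior_subset hsi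
  have hdimpi : Module.finrank ℝ (Fin m → ℝ) = m := by simp [Module.finrank_pi]
  -- Part 2 : A '' W ⊆ span F
  have part2 : A '' W ⊆ (Submodule.span ℝ F : Set (Fin m → ℝ)) := by
    rintro _ ⟨x, hxW, rfl⟩
    obtain ⟨μ, hμint, hμrep, hμpos⟩ := hxW
    set E : Set X := {y | ∀ i, a i y = a i x} with hE
    have hEm : MeasurableSet E := by
      have hEeq : E = ⋂ i, (a i) ⁻¹' {a i x} := by ext y; simp [hE]
      rw [hEeq]
      exact MeasurableSet.iInter fun i => (ha i) (measurableSet_singleton _)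
    by_cases hzero : ∀ i, a i x = 0
    · have hAx : A x = 0 := funext hzero
      rw [hAx]
      exact Submodule.zero_mem _
    push_neg at hzero
    obtain ⟨i0, hi0⟩ := hzero
    have hfin : μ E ≠ ⊤ := by
      have h1 : ∫⁻ y in E, (‖a i0 y‖₊ : ENNReal) ∂μ ≤ ∫⁻ y, (‖a i0 y‖₊ : ENNReal) ∂μ :=
        setLIntegral_le_lintegral _ _
      have h2 : ∫⁻ y, (‖a i0 y‖₊ : ENNReal) ∂μ < ⊤ := (hμint i0).2
      have h3 : ∫⁻ y in E, (‖a i0 y‖₊ : ENNReal) ∂μ = (‖a i0 x‖₊ : ENNReal) * μ E := by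
        rw [setLIntegral_congr_fun hEm
          (fun y (hy : ∀ i, a i y = a i x) => by rw [hy i0]),
          setLIntegral_const]
      intro htop
      rw [h3, htop, ENNReal.mul_top
        (by simpa [ENNReal.coe_eq_zero, nnnorm_eq_zero] using hi0)] at h1
      exact (lt_irrefl ⊤ (lt_of_le_of_lt h1 h2)).elim
    have hEpos : μ E ≠ 0 := ne_of_gt hμpos
    set cER : ℝ := (μ E).toReal with hcER
    have hcpos : 0 < cER := ENNReal.toReal_pos hEpos hfin
    have hdecomp : ∀ i, s i = cER * a i x + ∫ y in Eᶜ, a i y ∂μ := by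
      intro i
      rw [hμrep i, ← integral_add_compl hEm (hμint i)]
      congr 1
      rw [setIntegral_congr_fun hEm (fun y (hy : ∀ i, a i y = a i x) => hy i),
        setIntegral_const]
      simp [hcER, smul_eq_mul, mul_comm, measureReal_def]
    have hptS : (fun i => (2*cER) * a i x) ∈ S := by
      refine ⟨(ENNReal.ofReal (2*cER)) • Measure.dirac x, fun i =>
        (integrable_dirac_of_meas (ha i) x).smul_measure ENNReal.ofReal_ne_top, fun i => ?_⟩
      rw [integral_smul_measure, integral_dirac' _ _ (ha i).stronglyMeasurable,
        ENNReal.toReal_ofReal (by positivity), smul_eq_mul]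
    have htS : (fun i => 2 * ∫ y in Eᶜ, a i y ∂μ) ∈ S := by
      refine ⟨(2 : ENNReal) • μ.restrict Eᶜ, fun i =>
        ((hμint i).restrict).smul_measure (by norm_num), fun i => ?_⟩
      rw [integral_smul_measure]
      norm_num
    have hseg : s ∈ openSegment ℝ (fun i => (2*cER) * a i x)
        (fun i => 2 * ∫ y in Eᶜ, a i y ∂μ) := by
      refine ⟨1/2, 1/2, by norm_num, by norm_num, by norm_num, ?_⟩
      funext i
      simp only [Pi.add_apply, Pi.smul_apply, smul_eq_mul]
      rw [hdecomp i]
      ring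
    have h2c : (fun i => (2*cER) * a i x) ∈ F := hF.2 hptS htS hsF hseg
    have hAxval : A x = (2*cER)⁻¹ • (fun i => (2*cER) * a i x) := by
      funext i
      simp only [Pi.smul_apply, smul_eq_mul, hA]
      field_simp
    rw [hAxval]
    exact Submodule.smul_mem _ _ (Submodule.subset_span h2c)
  -- Part 1 : F ⊆ U
  have part1 : F ⊆ (U : Set (Fin m → ℝ)) := by
    intro t htF
    obtain ⟨ν, hνint, hνrep⟩ := hF.1 htF
    obtain ⟨ε, hεpos, hrF⟩ := exists_eps_mem hsi htF
    obtain ⟨μr, hμrint, hμrrep⟩ := hF.1 hrF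
    have hrank : Module.finrank ℝ
        (Submodule.span ℝ ((fun x i => a i x) '' Set.univ)) ≤ m :=
      le_trans (Submodule.finrank_le _) (le_of_eq hdimpi)
    obtain ⟨n, c, p, hc, hp, hsum⟩ :=
      richter_aux a ha ν hνint m Set.univ MeasurableSet.univ (by simp) hrank
    have htval : t = ∑ j, c j • A (p j) := by
      funext i
      rw [hνrep i]
      exact congrFun hsum i
    have hti : ∀ i, ∑ j, c j * a i (p j) = t i := by
      intro i
      rw [htval]
      simp [Finset.sum_apply, hA]
    have hri : ∀ i, ∫ y, a i y ∂μr = s i + ε * (s i - t i) := fun i => (hμrrep i).symm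
    set lam1 : ℝ := (1+ε)⁻¹ with hlam1
    set lam2 : ℝ := ε * (1+ε)⁻¹ with hlam2
    have h1ε : (0:ℝ) < 1 + ε := by linarith
    set μstar : Measure X := (ENNReal.ofReal lam1) • μr
      + ∑ j, (ENNReal.ofReal (lam2 * c j)) • Measure.dirac (p j) with hμstar
    have hsumint : ∀ i, Integrable (a i)
        (∑ j, (ENNReal.ofReal (lam2 * c j)) • Measure.dirac (p j)) := fun i =>
      integrable_finset_sum_measure.mpr fun j _ =>
        (integrable_dirac_of_meas (ha i) (p j)).smul_measure ENNReal.ofReal_ne_top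
    have hμsint : ∀ i, Integrable (a i) μstar := fun i =>
      ((hμrint i).smul_measure ENNReal.ofReal_ne_top).add_measure (hsumint i)
    have hμsrep : ∀ i, s i = ∫ y, a i y ∂μstar := by
      intro i
      rw [hμstar, integral_add_measure ((hμrint i).smul_measure ENNReal.ofReal_ne_top)
        (hsumint i), integral_smul_measure,
        integral_finset_sum_measure (fun j _ =>
          (integrable_dirac_of_meas (ha i) (p j)).smul_measure ENNReal.ofReal_ne_top)]
      simp_rw [integral_smul_measure, integral_dirac' _ _ (ha i).stronglyMeasurable]
      rw [ENNReal.toReal_ofReal (by positivity), hri i]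
      have hsum2 : ∑ j, (ENNReal.ofReal (lam2 * c j)).toReal • a i (p j)
          = lam2 * t i := by
        rw [← hti i, Finset.mul_sum]
        refine Finset.sum_congr rfl fun j _ => ?_
        rw [ENNReal.toReal_ofReal (mul_nonneg (by positivity) (hc j)), smul_eq_mul]
        ring
      rw [hsum2, hlam1, hlam2, smul_eq_mul]
      field_simp
      ring
    have hjW : ∀ j, 0 < c j → p j ∈ W := by
      intro j hcj
      refine ⟨μstar, hμsint, hμsrep, ?_⟩
      set Ej : Set X := {y | ∀ i, a i y = a i (p j)} with hEj
      have hmemj : p j ∈ Ej := fun i => rfl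
      have hle : ENNReal.ofReal (lam2 * c j) ≤ μstar Ej := by
        have e1 : ENNReal.ofReal (lam2 * c j)
            = ((ENNReal.ofReal (lam2 * c j)) • Measure.dirac (p j)) Ej := by
          rw [Measure.smul_apply, Measure.dirac_apply_of_mem hmemj, smul_eq_mul, mul_one]
        have e2 : ((ENNReal.ofReal (lam2 * c j)) • Measure.dirac (p j)) Ej
            ≤ (∑ j', (ENNReal.ofReal (lam2 * c j')) • Measure.dirac (p j')) Ej := by
          rw [Measure.finset_sum_apply]
          exact Finset.single_le_sum
            (f := fun j' => ((ENNReal.ofReal (lam2 * c j')) • Measure.dirac (p j')) Ej)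
            (fun _ _ => zero_le) (Finset.mem_univ j)
        have e3 : (∑ j', (ENNReal.ofReal (lam2 * c j')) • Measure.dirac (p j')) Ej
            ≤ μstar Ej := by
          rw [hμstar, Measure.add_apply]
          exact le_add_self
        rw [e1]
        exact le_trans e2 e3
      have hpos : (0:ENNReal) < ENNReal.ofReal (lam2 * c j) :=
        ENNReal.ofReal_pos.mpr (mul_pos (mul_pos hεpos (inv_pos.mpr h1ε)) hcj)
      exact lt_of_lt_of_le hpos hle
    rw [htval, SetLike.mem_coe]
    refine Submodule.sum_mem _ fun j _ => ?_
    by_cases h0 : c j = 0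
    · simp [h0]
    · exact Submodule.smul_mem _ _ (Submodule.subset_span
        ⟨p j, hjW j (lt_of_le_of_ne (hc j) (Ne.symm h0)), rfl⟩)
  have hspanF : Submodule.span ℝ F = U :=
    le_antisymm (Submodule.span_le.mpr part1) (Submodule.span_le.mpr part2)
  have hΓ : {pc : Fin m → ℝ | ∀ x ∈ W, ∑ i, pc i * a i x = 0}
      = {pc : Fin m → ℝ | ∀ v ∈ A '' W, ∑ i, pc i * v i = 0} := by
    ext pc
    simp [Set.forall_mem_image, hA]
  rw [hspanF, hΓ, finrank_dot_ann, ← hU]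
  have hUle : Module.finrank ℝ U ≤ m := le_trans (Submodule.finrank_le _) (le_of_eq hdimpi)
  omega
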